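/- arXiv:1004.4921 — 2 statements merged into one kernel-verified Lean document; each statement's English description precedes it below -/
import Mathlib

section
/- With the ILS data as in the context, there exist δ > 0 and η ≥ 0 such that for every real m×n matrix P with ‖P‖_F ≤ δ, the matrix (A+P)ᵀJ(A+P) is positive definite and ‖f(A+P) − f(A) − Df(A)[P]‖₂ ≤ (η/2)·‖P‖_F², where f(M) = (MᵀJM)⁻¹MᵀJb and Df(A)[P] = (AᵀJA)⁻¹(PᵀJr) − (AᵀJA)⁻¹AᵀJ(P·x). -/
set_option maxHeartbeats 1000000


open Matrix

/-- Euclidean (ℓ²) norm of a vector. -/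
noncomputable def eNorm {p : Type*} [Fintype p] (v : p → ℝ) : ℝ :=
  Real.sqrt (∑ i, (v i) ^ 2)

/-- Frobenius norm of a matrix. -/
noncomputable def frobNorm {p q : Type*} [Fintype p] [Fintype q]
    (M : Matrix p q ℝ) : ℝ :=
  Real.sqrt (∑ i, ∑ j, (M i j) ^ 2)

/-- Spectral (ℓ² operator) norm of a matrix. -/
noncomputable def specNorm {p q : Type*} [Fintype p] [Fintype q] [DecidableEq q]
    (M : Matrix p q ℝ) : ℝ :=
  ‖LinearMap.toContinuousLinearMap (Matrix.toEuclideanLin M)‖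

/-- Solution of the indefinite least squares problem: `x = (AᵀJA)⁻¹AᵀJb`. -/
noncomputable def ilsX {m n : ℕ} (A : Matrix (Fin m) (Fin n) ℝ)
    (J : Matrix (Fin m) (Fin m) ℝ) (b : Fin m → ℝ) : Fin n → ℝ :=
  ((Aᵀ * J * A)⁻¹ * Aᵀ * J) *ᵥ b

/-- Residual of the indefinite least squares problem: `r = b - Ax`. -/
noncomputable def ilsR {m n : ℕ} (A : Matrix (Fin m) (Fin n) ℝ)
    (J : Matrix (Fin m) (Fin m) ℝ) (b : Fin m → ℝ) : Fin m → ℝ :=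
  b - A *ᵥ (ilsX A J b)

/-- `M₁ = (AᵀJA)⁻¹ ⊗ (Jr)ᵀ`, realized as an `n × (n·m)` matrix whose column
index `(j, k)` corresponds to entry `(k, j)` of the perturbation matrix. -/
noncomputable def ilsM1 {m n : ℕ} (A : Matrix (Fin m) (Fin n) ℝ)
    (J : Matrix (Fin m) (Fin m) ℝ) (b : Fin m → ℝ) :
    Matrix (Fin n) (Fin n × Fin m) ℝ :=
  Matrix.of fun i jk => (Aᵀ * J * A)⁻¹ i jk.1 * (J *ᵥ (ilsR A J b)) jk.2

/-- `M₂ = xᵀ ⊗ (AᵀJA)⁻¹AᵀJ`, realized as an `n × (n·m)` matrix. -/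
noncomputable def ilsM2 {m n : ℕ} (A : Matrix (Fin m) (Fin n) ℝ)
    (J : Matrix (Fin m) (Fin m) ℝ) (b : Fin m → ℝ) :
    Matrix (Fin n) (Fin n × Fin m) ℝ :=
  Matrix.of fun i jk => (ilsX A J b) jk.1 * ((Aᵀ * J * A)⁻¹ * Aᵀ * J) i jk.2

section Aux

variable {p q : Type*} [Fintype p] [Fintype q]

lemma eNorm_nonneg (v : p → ℝ) : 0 ≤ eNorm v := Real.sqrt_nonneg _

lemma frobNorm_nonneg (M : Matrix p q ℝ) : 0 ≤ frobNorm M := Real.sqrt_nonneg _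

lemma eNorm_sq (v : p → ℝ) : eNorm v ^ 2 = ∑ i, (v i) ^ 2 :=
  Real.sq_sqrt (Finset.sum_nonneg fun _ _ => sq_nonneg _)

lemma frobNorm_sq (M : Matrix p q ℝ) : frobNorm M ^ 2 = ∑ i, ∑ j, (M i j) ^ 2 :=
  Real.sq_sqrt (Finset.sum_nonneg fun _ _ => Finset.sum_nonneg fun _ _ => sq_nonneg _)

lemma frobNorm_transpose (M : Matrix p q ℝ) : frobNorm Mᵀ = frobNorm M := by
  unfold frobNorm
  rw [Finset.sum_comm]
  rfl

lemma abs_dotProduct_le (u v : p → ℝ) : |u ⬝ᵥ v| ≤ eNorm u * eNorm v := by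
  have h := Finset.sum_mul_sq_le_sq_mul_sq Finset.univ u v
  have h2 : (u ⬝ᵥ v) ^ 2 ≤ (eNorm u * eNorm v) ^ 2 := by
    rw [mul_pow, eNorm_sq, eNorm_sq]; exact h
  calc |u ⬝ᵥ v| = Real.sqrt ((u ⬝ᵥ v) ^ 2) := (Real.sqrt_sq_eq_abs _).symm
    _ ≤ Real.sqrt ((eNorm u * eNorm v) ^ 2) := Real.sqrt_le_sqrt h2
    _ = eNorm u * eNorm v :=
        Real.sqrt_sq (mul_nonneg (eNorm_nonneg _) (eNorm_nonneg _))

lemma dotProduct_le (u v : p → ℝ) : u ⬝ᵥ v ≤ eNorm u * eNorm v :=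
  (le_abs_self _).trans (abs_dotProduct_le u v)

lemma eNorm_mulVec_le (M : Matrix p q ℝ) (v : q → ℝ) :
    eNorm (M *ᵥ v) ≤ frobNorm M * eNorm v := by
  have h2 : eNorm (M *ᵥ v) ^ 2 ≤ (frobNorm M * eNorm v) ^ 2 := by
    rw [mul_pow, eNorm_sq, frobNorm_sq, eNorm_sq, Finset.sum_mul]
    refine Finset.sum_le_sum fun i _ => ?_
    exact Finset.sum_mul_sq_le_sq_mul_sq Finset.univ (M i) v
  calc eNorm (M *ᵥ v) = Real.sqrt (eNorm (M *ᵥ v) ^ 2) :=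
        (Real.sqrt_sq (eNorm_nonneg _)).symm
    _ ≤ Real.sqrt ((frobNorm M * eNorm v) ^ 2) := Real.sqrt_le_sqrt h2
    _ = frobNorm M * eNorm v :=
        Real.sqrt_sq (mul_nonneg (frobNorm_nonneg _) (eNorm_nonneg _))

lemma eNorm_mulVec_mono (M : Matrix p q ℝ) {v : q → ℝ} {C : ℝ} (h : eNorm v ≤ C) :
    eNorm (M *ᵥ v) ≤ frobNorm M * C :=
  (eNorm_mulVec_le M v).trans (mul_le_mul_of_nonneg_left h (frobNorm_nonneg M))

lemma eNorm_eq_norm (v : p → ℝ) :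
    eNorm v = ‖(WithLp.equiv 2 (p → ℝ)).symm v‖ := by
  rw [EuclideanSpace.norm_eq]
  simp [eNorm, Real.norm_eq_abs, sq_abs]

lemma eNorm_add_le (u v : p → ℝ) : eNorm (u + v) ≤ eNorm u + eNorm v := by
  rw [eNorm_eq_norm, eNorm_eq_norm, eNorm_eq_norm]
  exact norm_add_le _ _

lemma eNorm_neg (v : p → ℝ) : eNorm (-v) = eNorm v := by
  rw [eNorm_eq_norm, eNorm_eq_norm]; exact norm_neg _

lemma eNorm_sub_le (u v : p → ℝ) : eNorm (u - v) ≤ eNorm u + eNorm v := by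
  rw [sub_eq_add_neg]
  exact (eNorm_add_le u (-v)).trans (by rw [eNorm_neg])

lemma eNorm_pos {v : p → ℝ} (hv : v ≠ 0) : 0 < eNorm v := by
  apply Real.sqrt_pos.mpr
  obtain ⟨i, hi⟩ : ∃ i, v i ≠ 0 := Function.ne_iff.mp hv
  exact Finset.sum_pos' (fun _ _ => sq_nonneg _)
    ⟨i, Finset.mem_univ i, by positivity⟩

/-- uniform coercivity for a positive definite matrix -/
lemma posdef_coercive {n : ℕ} (hn : n ≥ 1) (B : Matrix (Fin n) (Fin n) ℝ)
    (hB : B.PosDef) :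
    ∃ c > (0:ℝ), ∀ v : Fin n → ℝ, c * eNorm v ^ 2 ≤ v ⬝ᵥ (B *ᵥ v) := by
  haveI : Nonempty (Fin n) := ⟨⟨0, hn⟩⟩
  set g : (Fin n → ℝ) → ℝ := fun v => v ⬝ᵥ (B *ᵥ v) with hg
  have hcont : Continuous g := by
    have : g = fun v => ∑ i, v i * ∑ j, B i j * v j := by
      funext v
      simp [hg, dotProduct, mulVec]
    rw [this]
    refine continuous_finset_sum _ fun i _ => ?_
    exact (continuous_apply i).mul (continuous_finset_sum _ fun j _ =>
      continuous_const.mul (continuous_apply j))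
  have hcompact : IsCompact (Metric.sphere (0 : Fin n → ℝ) 1) := isCompact_sphere 0 1
  have hne : (Metric.sphere (0 : Fin n → ℝ) 1).Nonempty :=
    NormedSpace.sphere_nonempty.mpr zero_le_one
  obtain ⟨z, hz, hzmin⟩ := hcompact.exists_isMinOn hne hcont.continuousOn
  have hz1 : ‖z‖ = 1 := by simpa using hz
  have hzne : z ≠ 0 := by intro h; rw [h] at hz1; simp at hz1
  have hczpos : 0 < g z := by
    have := hB.dotProduct_mulVec_pos hzne
    simpa [hg] using this
  refine ⟨g z / n, by positivity, ?_⟩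
  intro v
  by_cases hv : v = 0
  · simp [hv, eNorm, hg]
  · have hnv : (0:ℝ) < ‖v‖ := norm_pos_iff.mpr hv
    set u : Fin n → ℝ := ‖v‖⁻¹ • v with hu
    have hu1 : ‖u‖ = 1 := by
      rw [hu, norm_smul]
      simp [abs_of_nonneg (inv_nonneg.mpr hnv.le), inv_mul_cancel₀ hnv.ne']
    have husph : u ∈ Metric.sphere (0 : Fin n → ℝ) 1 := by simp [hu1]
    have hgu : g z ≤ g u := hzmin husph
    have hgv : g v = ‖v‖ ^ 2 * g u := by
      have : v = ‖v‖ • u := by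
        rw [hu, smul_smul, mul_inv_cancel₀ hnv.ne', one_smul]
      rw [hg]
      conv_lhs => rw [this]
      simp only
      rw [smul_dotProduct, Matrix.mulVec_smul, dotProduct_smul]
      simp [smul_eq_mul]
      ring
    have hEn : eNorm v ^ 2 ≤ (n : ℝ) * ‖v‖ ^ 2 := by
      rw [eNorm_sq]
      calc ∑ i, v i ^ 2 ≤ ∑ _i : Fin n, ‖v‖ ^ 2 := by
            refine Finset.sum_le_sum fun i _ => ?_
            have h0 : |v i| ≤ ‖v‖ := by
              simpa [Real.norm_eq_abs] using norm_le_pi_norm v i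
            calc v i ^ 2 = |v i| ^ 2 := (sq_abs _).symm
              _ ≤ ‖v‖ ^ 2 := by gcongr
        _ = (n : ℝ) * ‖v‖ ^ 2 := by simp [Finset.sum_const, mul_comm]
    calc g z / n * eNorm v ^ 2 ≤ g z / n * ((n:ℝ) * ‖v‖ ^ 2) := by
          apply mul_le_mul_of_nonneg_left hEn (by positivity)
      _ = g z * ‖v‖ ^ 2 := by field_simp
      _ ≤ g u * ‖v‖ ^ 2 := by
          apply mul_le_mul_of_nonneg_right hgu (by positivity)
      _ = g v := by rw [hgv]; ring

end Aux

/-- Taylor remainder bound: there are `δ > 0` and `η ≥ 0` such that every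
perturbation `P` with `‖P‖_F ≤ δ` keeps `(A+P)ᵀJ(A+P)` positive definite and
`‖f(A+P) − f(A) − Df(A)[P]‖₂ ≤ (η/2)‖P‖_F²`. -/
theorem stmt_7 (m n : ℕ) (hmn : m > n) (hn : n ≥ 1)
    (A : Matrix (Fin m) (Fin n) ℝ) (b : Fin m → ℝ)
    (d : Fin m → ℝ) (hd : ∀ i, d i = 1 ∨ d i = -1)
    (J : Matrix (Fin m) (Fin m) ℝ) (hJ : J = Matrix.diagonal d)
    (hpd : (Aᵀ * J * A).PosDef) :
    ∃ δ > (0 : ℝ), ∃ η ≥ (0 : ℝ), ∀ P : Matrix (Fin m) (Fin n) ℝ, frobNorm P ≤ δ →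
      ((A + P)ᵀ * J * (A + P)).PosDef ∧
      eNorm (ilsX (A + P) J b - ilsX A J b
          - ((Aᵀ * J * A)⁻¹ *ᵥ (Pᵀ *ᵥ (J *ᵥ ilsR A J b))
            - ((Aᵀ * J * A)⁻¹ * Aᵀ * J) *ᵥ (P *ᵥ ilsX A J b)))
        ≤ (η / 2) * (frobNorm P) ^ 2 := by
  obtain ⟨c, hc, hcoer⟩ := posdef_coercive hn (Aᵀ * J * A) hpd
  set B : Matrix (Fin n) (Fin n) ℝ := Aᵀ * J * A with hBdef
  set x : Fin n → ℝ := ilsX A J b with hxdef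
  set r : Fin m → ℝ := ilsR A J b with hrdef
  set a : ℝ := frobNorm A with hadef
  set jn : ℝ := frobNorm J with hjdef
  set xx : ℝ := eNorm x with hxxdef
  set bb : ℝ := eNorm b with hbbdef
  set iB : ℝ := frobNorm B⁻¹ with hiBdef
  set K : ℝ := (2/c) * (jn*bb + (2*jn*a + jn)*xx) with hKdef
  have ha0 : 0 ≤ a := frobNorm_nonneg _
  have hj0 : 0 ≤ jn := frobNorm_nonneg _
  have hxx0 : 0 ≤ xx := eNorm_nonneg _
  have hbb0 : 0 ≤ bb := eNorm_nonneg _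
  have hiB0 : 0 ≤ iB := frobNorm_nonneg _
  have hK0 : 0 ≤ K := by positivity
  set s : ℝ := 2*jn*a + jn + 1 with hsdef
  have hs0 : 0 < s := by positivity
  have hJsymm : Jᵀ = J := by rw [hJ]; exact Matrix.diagonal_transpose d
  have hBdet : IsUnit B.det := hpd.det_pos.ne'.isUnit
  have hBBinv : B * B⁻¹ = 1 := Matrix.mul_nonsing_inv _ hBdet
  have hBinvB : B⁻¹ * B = 1 := Matrix.nonsing_inv_mul _ hBdet
  have hBx : B *ᵥ x = Aᵀ *ᵥ (J *ᵥ b) := by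
    rw [hxdef]
    show B *ᵥ ((B⁻¹ * Aᵀ * J) *ᵥ b) = _
    rw [Matrix.mulVec_mulVec, ← Matrix.mul_assoc, ← Matrix.mul_assoc, hBBinv,
      Matrix.one_mul, ← Matrix.mulVec_mulVec]
  refine ⟨min 1 (c/(2*s)), lt_min one_pos (by positivity),
    2 * iB * (2*a*jn*K + jn*(xx+K)), by positivity, ?_⟩
  intro P hP
  set t : ℝ := frobNorm P with htdef
  have ht0 : 0 ≤ t := frobNorm_nonneg _
  have ht1 : t ≤ 1 := hP.trans (min_le_left _ _)
  have hts : t * s ≤ c / 2 := by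
    have h2 : t ≤ c / (2*s) := hP.trans (min_le_right _ _)
    calc t * s ≤ (c/(2*s)) * s := mul_le_mul_of_nonneg_right h2 hs0.le
      _ = c / 2 := by field_simp
  have htP : frobNorm Pᵀ = t := by rw [frobNorm_transpose]
  set Bp : Matrix (Fin n) (Fin n) ℝ := (A + P)ᵀ * J * (A + P) with hBpdef
  -- the quadratic form of Bp is uniformly coercive
  have hq : ∀ v : Fin n → ℝ, (c/2) * eNorm v ^ 2 ≤ v ⬝ᵥ (Bp *ᵥ v) := by
    intro v
    set e : ℝ := eNorm v with hedef
    have he0 : 0 ≤ e := eNorm_nonneg _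
    have hsplit : v ⬝ᵥ (Bp *ᵥ v)
        = (A *ᵥ v) ⬝ᵥ (J *ᵥ (A *ᵥ v)) + (A *ᵥ v) ⬝ᵥ (J *ᵥ (P *ᵥ v))
          + (P *ᵥ v) ⬝ᵥ (J *ᵥ (A *ᵥ v)) + (P *ᵥ v) ⬝ᵥ (J *ᵥ (P *ᵥ v)) := by
      rw [hBpdef, ← Matrix.mulVec_mulVec, ← Matrix.mulVec_mulVec,
        Matrix.dotProduct_mulVec v (A+P)ᵀ, Matrix.vecMul_transpose,
        Matrix.add_mulVec, Matrix.mulVec_add, dotProduct_add,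
        add_dotProduct, add_dotProduct]
      ring
    have hbase : c * e ^ 2 ≤ (A *ᵥ v) ⬝ᵥ (J *ᵥ (A *ᵥ v)) := by
      have := hcoer v
      rw [hBdef, ← Matrix.mulVec_mulVec, ← Matrix.mulVec_mulVec,
        Matrix.dotProduct_mulVec v Aᵀ, Matrix.vecMul_transpose] at this
      exact this
    have hAv : eNorm (A *ᵥ v) ≤ a * e := eNorm_mulVec_le A v
    have hPv : eNorm (P *ᵥ v) ≤ t * e := eNorm_mulVec_le P v
    have hAv0 : 0 ≤ eNorm (A *ᵥ v) := eNorm_nonneg _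
    have hPv0 : 0 ≤ eNorm (P *ᵥ v) := eNorm_nonneg _
    have c1 : |(A *ᵥ v) ⬝ᵥ (J *ᵥ (P *ᵥ v))| ≤ (a*e) * (jn * (t*e)) := by
      refine (abs_dotProduct_le _ _).trans ?_
      have := eNorm_mulVec_mono J hPv
      exact mul_le_mul hAv this (eNorm_nonneg _) (by positivity)
    have c2 : |(P *ᵥ v) ⬝ᵥ (J *ᵥ (A *ᵥ v))| ≤ (t*e) * (jn * (a*e)) := by
      refine (abs_dotProduct_le _ _).trans ?_
      have := eNorm_mulVec_mono J hAv
      exact mul_le_mul hPv this (eNorm_nonneg _) (by positivity)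
    have c3 : |(P *ᵥ v) ⬝ᵥ (J *ᵥ (P *ᵥ v))| ≤ (t*e) * (jn * (t*e)) := by
      refine (abs_dotProduct_le _ _).trans ?_
      have := eNorm_mulVec_mono J hPv
      exact mul_le_mul hPv this (eNorm_nonneg _) (by positivity)
    have habs1 := (abs_le.mp c1).1
    have habs2 := (abs_le.mp c2).1
    have habs3 := (abs_le.mp c3).1
    rw [hsplit]
    -- cross terms total at least -(2*a*jn*t + jn*t*t) e^2 ≥ -(c/2) e^2
    have hkey : (2*a*jn*t + jn*(t*t)) * e^2 ≤ (c/2) * e^2 := by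
      have h1 : 2*a*jn*t + jn*(t*t) ≤ t * s := by
        have : jn * (t*t) ≤ jn * t := by
          have : t * t ≤ t := by nlinarith
          exact mul_le_mul_of_nonneg_left this hj0
        nlinarith
      have h2 : (2*a*jn*t + jn*(t*t)) ≤ c/2 := le_trans h1 hts
      have h3 : 0 ≤ e^2 := sq_nonneg _
      exact mul_le_mul_of_nonneg_right h2 h3
    nlinarith [sq_nonneg e]
  
  have hJherm : J.IsHermitian := by
    rw [hJ]; exact Matrix.isHermitian_diagonal d
  have hBp_herm : Bp.IsHermitian := by
    have h := Matrix.isHermitian_conjTranspose_mul_mul (A + P) hJherm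
    rwa [Matrix.conjTranspose_eq_transpose_of_trivial] at h
  have hBp_pd : Bp.PosDef := by
    refine Matrix.PosDef.of_dotProduct_mulVec_pos hBp_herm (fun ⦃v⦄ hv => ?_)
    have hsv : star v = v := by simp
    rw [hsv]
    have h1 := hq v
    have h2 : 0 < eNorm v := eNorm_pos hv
    have h3 : 0 < (c/2) * eNorm v ^ 2 := by positivity
    linarith
  refine ⟨hBp_pd, ?_⟩
  have hBpdet : IsUnit Bp.det := hBp_pd.det_pos.ne'.isUnit
  have hBpBpinv : Bp * Bp⁻¹ = 1 := Matrix.mul_nonsing_inv _ hBpdet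
  have hBpinvBp : Bp⁻¹ * Bp = 1 := Matrix.nonsing_inv_mul _ hBpdet
  have hinv_bound : ∀ v : Fin n → ℝ, eNorm (Bp⁻¹ *ᵥ v) ≤ (2/c) * eNorm v := by
    intro v
    set z := Bp⁻¹ *ᵥ v with hz
    have hBpz : Bp *ᵥ z = v := by
      rw [hz, Matrix.mulVec_mulVec, hBpBpinv, Matrix.one_mulVec]
    have h1 : (c/2) * eNorm z ^ 2 ≤ z ⬝ᵥ v := by
      have := hq z; rwa [hBpz] at this
    have h2 : z ⬝ᵥ v ≤ eNorm z * eNorm v := dotProduct_le z v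
    have hz0 : 0 ≤ eNorm z := eNorm_nonneg _
    have hv0 : 0 ≤ eNorm v := eNorm_nonneg _
    rcases eq_or_lt_of_le hz0 with h|h
    · rw [← h]; positivity
    · have h4 : (c/2 * eNorm z) * eNorm z ≤ eNorm v * eNorm z := by nlinarith
      have h5 := le_of_mul_le_mul_right h4 h
      calc eNorm z = (2/c) * (c/2 * eNorm z) := by field_simp
        _ ≤ (2/c) * (eNorm v) := by
            apply mul_le_mul_of_nonneg_left h5 (by positivity)
        _ = 2/c * eNorm v := by ring
  set y : Fin n → ℝ := ilsX (A+P) J b with hydef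
  have hBpy : Bp *ᵥ y = Aᵀ *ᵥ (J *ᵥ b) + Pᵀ *ᵥ (J *ᵥ b) := by
    rw [hydef]
    show Bp *ᵥ ((Bp⁻¹ * (A+P)ᵀ * J) *ᵥ b) = _
    rw [Matrix.mulVec_mulVec, ← Matrix.mul_assoc, ← Matrix.mul_assoc, hBpBpinv,
      Matrix.one_mul, Matrix.transpose_add, Matrix.add_mul, Matrix.add_mulVec]
    simp only [← Matrix.mulVec_mulVec]
  set E : Matrix (Fin n) (Fin n) ℝ := Aᵀ*J*P + Pᵀ*J*A + Pᵀ*J*P with hEdef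
  have hBpE : Bp = B + E := by
    rw [hBpdef, hBdef, hEdef, Matrix.transpose_add]
    simp only [Matrix.add_mul, Matrix.mul_add]
    abel
  have hEy : ∀ v : Fin n → ℝ,
      E *ᵥ v = Aᵀ *ᵥ (J *ᵥ (P *ᵥ v)) + Pᵀ *ᵥ (J *ᵥ (A *ᵥ v)) + Pᵀ *ᵥ (J *ᵥ (P *ᵥ v)) := by
    intro v
    rw [hEdef, Matrix.add_mulVec, Matrix.add_mulVec]
    simp only [← Matrix.mulVec_mulVec]
  have hBy : B *ᵥ y = Bp *ᵥ y - E *ᵥ y := by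
    have h : B *ᵥ y + E *ᵥ y = Bp *ᵥ y := by rw [← Matrix.add_mulVec, ← hBpE]
    linear_combination (norm := module) h
  have hr : r = b - A *ᵥ x := by rw [hrdef, hxdef]; rfl
  -- first-order bound on y - x
  have hyx : y - x = Bp⁻¹ *ᵥ (Pᵀ *ᵥ (J *ᵥ b) - E *ᵥ x) := by
    have h1 : Bp *ᵥ (y - x) = Pᵀ *ᵥ (J *ᵥ b) - E *ᵥ x := by
      rw [Matrix.mulVec_sub, hBpy]
      have h2 : Bp *ᵥ x = B *ᵥ x + E *ᵥ x := by rw [hBpE, Matrix.add_mulVec]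
      rw [h2, hBx]
      abel
    calc y - x = Bp⁻¹ *ᵥ (Bp *ᵥ (y - x)) := by
          rw [Matrix.mulVec_mulVec, hBpinvBp, Matrix.one_mulVec]
      _ = _ := by rw [h1]
  have hb1 : eNorm (Pᵀ *ᵥ (J *ᵥ b)) ≤ t * (jn * bb) := by
    have h := eNorm_mulVec_mono Pᵀ (eNorm_mulVec_le J b)
    rwa [htP] at h
  have hxPx : eNorm (P *ᵥ x) ≤ t * xx := eNorm_mulVec_le P x
  have hE1 : eNorm (Aᵀ *ᵥ (J *ᵥ (P *ᵥ x))) ≤ a * (jn * (t * xx)) := by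
    have h := eNorm_mulVec_mono Aᵀ (eNorm_mulVec_mono J hxPx)
    rwa [frobNorm_transpose] at h
  have hE2 : eNorm (Pᵀ *ᵥ (J *ᵥ (A *ᵥ x))) ≤ t * (jn * (a * xx)) := by
    have h := eNorm_mulVec_mono Pᵀ (eNorm_mulVec_mono J (eNorm_mulVec_le A x))
    rwa [htP] at h
  have hE3 : eNorm (Pᵀ *ᵥ (J *ᵥ (P *ᵥ x))) ≤ t * (jn * (t * xx)) := by
    have h := eNorm_mulVec_mono Pᵀ (eNorm_mulVec_mono J hxPx)
    rwa [htP] at h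
  have hEx : eNorm (E *ᵥ x) ≤ a * (jn * (t * xx)) + t * (jn * (a * xx)) + t * (jn * (t * xx)) := by
    rw [hEy x]
    calc eNorm (Aᵀ *ᵥ (J *ᵥ (P *ᵥ x)) + Pᵀ *ᵥ (J *ᵥ (A *ᵥ x)) + Pᵀ *ᵥ (J *ᵥ (P *ᵥ x)))
        ≤ eNorm (Aᵀ *ᵥ (J *ᵥ (P *ᵥ x)) + Pᵀ *ᵥ (J *ᵥ (A *ᵥ x))) + eNorm (Pᵀ *ᵥ (J *ᵥ (P *ᵥ x))) :=
          eNorm_add_le _ _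
      _ ≤ (eNorm (Aᵀ *ᵥ (J *ᵥ (P *ᵥ x))) + eNorm (Pᵀ *ᵥ (J *ᵥ (A *ᵥ x)))) + eNorm (Pᵀ *ᵥ (J *ᵥ (P *ᵥ x))) :=
          add_le_add (eNorm_add_le _ _) le_rfl
      _ ≤ _ := by
          have := add_le_add (add_le_add hE1 hE2) hE3
          linarith
  have hyxnorm : eNorm (y - x) ≤ K * t := by
    rw [hyx]
    refine (hinv_bound _).trans ?_
    have h1 : eNorm (Pᵀ *ᵥ (J *ᵥ b) - E *ᵥ x)
        ≤ t * (jn * bb) + (a * (jn * (t * xx)) + t * (jn * (a * xx)) + t * (jn * (t * xx))) := by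
      refine (eNorm_sub_le _ _).trans (add_le_add hb1 hEx)
    have h2 : t * (jn * bb) + (a * (jn * (t * xx)) + t * (jn * (a * xx)) + t * (jn * (t * xx)))
        ≤ (jn*bb + (2*jn*a + jn)*xx) * t := by nlinarith [mul_nonneg (mul_nonneg (mul_nonneg hj0 ht0) hxx0) (sub_nonneg.mpr ht1)]
    calc 2/c * eNorm (Pᵀ *ᵥ (J *ᵥ b) - E *ᵥ x)
        ≤ 2/c * ((jn*bb + (2*jn*a + jn)*xx) * t) := by
          apply mul_le_mul_of_nonneg_left (h1.trans h2) (by positivity)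
      _ = K * t := by rw [hKdef]; ring
  have hynorm : eNorm y ≤ xx + K := by
    have h1 : y = x + (y - x) := by abel
    calc eNorm y = eNorm (x + (y - x)) := by rw [← h1]
      _ ≤ eNorm x + eNorm (y - x) := eNorm_add_le _ _
      _ ≤ xx + K * t := add_le_add le_rfl hyxnorm
      _ ≤ xx + K := by nlinarith
  -- the exact remainder identity
  set w : Fin n → ℝ :=
    -(Aᵀ *ᵥ (J *ᵥ (P *ᵥ (y - x))) + Pᵀ *ᵥ (J *ᵥ (A *ᵥ (y - x))) + Pᵀ *ᵥ (J *ᵥ (P *ᵥ y))) with hwdef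
  have hmain : y - x - (B⁻¹ *ᵥ (Pᵀ *ᵥ (J *ᵥ r)) - (B⁻¹ * Aᵀ * J) *ᵥ (P *ᵥ x)) = B⁻¹ *ᵥ w := by
    have hBL : B *ᵥ (y - x - (B⁻¹ *ᵥ (Pᵀ *ᵥ (J *ᵥ r)) - (B⁻¹ * Aᵀ * J) *ᵥ (P *ᵥ x))) = w := by
      have pS : B *ᵥ (B⁻¹ *ᵥ (Pᵀ *ᵥ (J *ᵥ r))) = Pᵀ *ᵥ (J *ᵥ b) - Pᵀ *ᵥ (J *ᵥ (A *ᵥ x)) := by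
        rw [Matrix.mulVec_mulVec, hBBinv, Matrix.one_mulVec, hr,
          Matrix.mulVec_sub, Matrix.mulVec_sub]
      have pT : B *ᵥ ((B⁻¹ * Aᵀ * J) *ᵥ (P *ᵥ x)) = Aᵀ *ᵥ (J *ᵥ (P *ᵥ x)) := by
        rw [Matrix.mulVec_mulVec, ← Matrix.mul_assoc, ← Matrix.mul_assoc, hBBinv,
          Matrix.one_mul]
        simp only [← Matrix.mulVec_mulVec]
      rw [Matrix.mulVec_sub, Matrix.mulVec_sub, Matrix.mulVec_sub, hBy, hBpy, hBx, pS, pT, hEy y, hwdef]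
      have hPyx : P *ᵥ (y - x) = P *ᵥ y - P *ᵥ x := Matrix.mulVec_sub P y x
      have hAyx : A *ᵥ (y - x) = A *ᵥ y - A *ᵥ x := Matrix.mulVec_sub A y x
      rw [hPyx, hAyx, Matrix.mulVec_sub J, Matrix.mulVec_sub J,
        Matrix.mulVec_sub Aᵀ, Matrix.mulVec_sub Pᵀ]
      abel
    have hfold : ∀ v : Fin n → ℝ, B⁻¹ *ᵥ (B *ᵥ v) = v := by
      intro v; rw [Matrix.mulVec_mulVec, hBinvB, Matrix.one_mulVec]
    rw [← hBL, hfold]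
  rw [hmain]
  -- final estimate
  have e1 : eNorm (Aᵀ *ᵥ (J *ᵥ (P *ᵥ (y - x)))) ≤ a * (jn * (t * (K * t))) := by
    have h := eNorm_mulVec_mono Aᵀ (eNorm_mulVec_mono J (eNorm_mulVec_mono P hyxnorm))
    rwa [frobNorm_transpose] at h
  have e2 : eNorm (Pᵀ *ᵥ (J *ᵥ (A *ᵥ (y - x)))) ≤ t * (jn * (a * (K * t))) := by
    have h := eNorm_mulVec_mono Pᵀ (eNorm_mulVec_mono J (eNorm_mulVec_mono A hyxnorm))
    rwa [htP] at h
  have e3 : eNorm (Pᵀ *ᵥ (J *ᵥ (P *ᵥ y))) ≤ t * (jn * (t * (xx + K))) := by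
    have h := eNorm_mulVec_mono Pᵀ (eNorm_mulVec_mono J (eNorm_mulVec_mono P hynorm))
    rwa [htP] at h
  have hw : eNorm w ≤ a * (jn * (t * (K * t))) + t * (jn * (a * (K * t))) + t * (jn * (t * (xx + K))) := by
    rw [hwdef, eNorm_neg]
    calc eNorm (Aᵀ *ᵥ (J *ᵥ (P *ᵥ (y - x))) + Pᵀ *ᵥ (J *ᵥ (A *ᵥ (y - x))) + Pᵀ *ᵥ (J *ᵥ (P *ᵥ y)))
        ≤ eNorm (Aᵀ *ᵥ (J *ᵥ (P *ᵥ (y - x))) + Pᵀ *ᵥ (J *ᵥ (A *ᵥ (y - x)))) + eNorm (Pᵀ *ᵥ (J *ᵥ (P *ᵥ y))) :=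
          eNorm_add_le _ _
      _ ≤ (eNorm (Aᵀ *ᵥ (J *ᵥ (P *ᵥ (y - x)))) + eNorm (Pᵀ *ᵥ (J *ᵥ (A *ᵥ (y - x)))))
            + eNorm (Pᵀ *ᵥ (J *ᵥ (P *ᵥ y))) := add_le_add (eNorm_add_le _ _) le_rfl
      _ ≤ _ := by
          have := add_le_add (add_le_add e1 e2) e3
          linarith
  calc eNorm (B⁻¹ *ᵥ w) ≤ iB * eNorm w := eNorm_mulVec_le _ _
    _ ≤ iB * (a * (jn * (t * (K * t))) + t * (jn * (a * (K * t))) + t * (jn * (t * (xx + K)))) :=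
        mul_le_mul_of_nonneg_left hw hiB0
    _ = 2 * iB * (2*a*jn*K + jn*(xx+K)) / 2 * t ^ 2 := by ring
end

section
/- For 0 < α < π/4, set θ = π/4 − α, and consider the ILS problem with A the 2×1 matrix (cos θ, sin θ)ᵀ, b = (1, 1)ᵀ, and J = diag(1, −1). Then ‖M₁‖₂ = ‖M₂‖₂ = 2^{-1/2}·csc(2α)·sec(α), so that ℬ = (‖A‖_F/‖x‖₂)·(‖M₁‖₂ + ‖M₂‖₂) = 2 csc(2α), and with χ = (‖A‖_F/‖x‖₂)·‖M₁ − M₂‖₂ = sec(α) the ratio satisfies ℬ/χ = 1/sin(α); in particular ℬ/χ tends to +∞ as α → 0⁺, so ℬ overestimates χ by an arbitrarily large factor. -/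
open Matrix

/-- The 2×1 example matrix `A = (cos θ, sin θ)ᵀ`. -/
noncomputable def exA (θ : ℝ) : Matrix (Fin 2) (Fin 1) ℝ := !![Real.cos θ; Real.sin θ]

/-- The signature matrix `J = diag(1, −1)`. -/
noncomputable def exJ : Matrix (Fin 2) (Fin 2) ℝ := !![1, 0; 0, -1]

/-- The right-hand side `b = (1, 1)ᵀ`. -/
noncomputable def exb : Fin 2 → ℝ := ![1, 1]

/-- The bound coefficient `ℬ = (‖A‖_F/‖x‖₂)(‖M₁‖₂ + ‖M₂‖₂)` of the 2×1 example,
as a function of `α` (with `θ = π/4 − α`). -/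
noncomputable def exB (α : ℝ) : ℝ :=
  (frobNorm (exA (Real.pi / 4 - α)) / eNorm (ilsX (exA (Real.pi / 4 - α)) exJ exb))
    * (specNorm (ilsM1 (exA (Real.pi / 4 - α)) exJ exb)
        + specNorm (ilsM2 (exA (Real.pi / 4 - α)) exJ exb))

/-- The condition number `χ = (‖A‖_F/‖x‖₂)·‖M₁ − M₂‖₂` of the 2×1 example,
as a function of `α` (with `θ = π/4 − α`). -/
noncomputable def exChi (α : ℝ) : ℝ :=
  (frobNorm (exA (Real.pi / 4 - α)) / eNorm (ilsX (exA (Real.pi / 4 - α)) exJ exb))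
    * specNorm (ilsM1 (exA (Real.pi / 4 - α)) exJ exb
        - ilsM2 (exA (Real.pi / 4 - α)) exJ exb)

lemma specNorm_one_row {q : Type*} [Fintype q] [DecidableEq q] (M : Matrix (Fin 1) q ℝ) :
    specNorm M = Real.sqrt (∑ j, (M 0 j)^2) := by
  classical
  set w : EuclideanSpace ℝ q := (WithLp.equiv 2 (q → ℝ)).symm (fun j => M 0 j) with hwdef
  have hw : ‖w‖ = Real.sqrt (∑ j, (M 0 j)^2) := by
    rw [EuclideanSpace.norm_eq]
    congr 1
    refine Finset.sum_congr rfl fun j _ => ?_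
    simp [hwdef, sq_abs]
  set T := LinearMap.toContinuousLinearMap (Matrix.toEuclideanLin M) with hTdef
  have hTv : ∀ v : EuclideanSpace ℝ q, ‖T v‖ = |(inner ℝ w v : ℝ)| := by
    intro v
    have h1 : T v = Matrix.toEuclideanLin M v := rfl
    rw [h1, Matrix.toEuclideanLin_apply, EuclideanSpace.norm_eq]
    rw [Fin.sum_univ_one]
    rw [Real.sqrt_sq_eq_abs]
    have h2 : (inner ℝ w v : ℝ) = ∑ j, M 0 j * v j := by
      simp [PiLp.inner_apply, RCLike.inner_apply, hwdef]
      exact Finset.sum_congr rfl fun _ _ => mul_comm _ _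
    rw [h2]
    simp [Matrix.mulVec, dotProduct, Real.norm_eq_abs]
  have key : specNorm M = ‖w‖ := by
    rw [show specNorm M = ‖T‖ from rfl]
    apply le_antisymm
    · apply ContinuousLinearMap.opNorm_le_bound _ (norm_nonneg w)
      intro v
      rw [hTv v]
      exact abs_real_inner_le_norm w v
    · rcases eq_or_ne w 0 with h0 | h0
      · simp [h0]
      · have h1 : ‖T w‖ = ‖w‖ ^ 2 := by
          rw [hTv w, real_inner_self_eq_norm_sq, abs_of_nonneg (by positivity)]
        have h2 := T.le_opNorm w
        rw [h1] at h2
        have hwpos : 0 < ‖w‖ := norm_pos_iff.mpr h0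
        nlinarith
  rw [key, hw]

set_option maxHeartbeats 1600000 in
open Filter Topology in
/-- First example of the paper, continued: `‖M₁‖₂ = ‖M₂‖₂ = 2^{-1/2} csc(2α) sec(α)`,
`ℬ = 2 csc(2α)`, `χ = sec α`, `ℬ/χ = 1/sin α`, and `ℬ/χ → ∞` as `α → 0⁺`. -/
theorem stmt_14 :
    (∀ α : ℝ, 0 < α → α < Real.pi / 4 →
      specNorm (ilsM1 (exA (Real.pi / 4 - α)) exJ exb)
        = (Real.sqrt 2)⁻¹ * (Real.sin (2 * α))⁻¹ * (Real.cos α)⁻¹ ∧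
      specNorm (ilsM2 (exA (Real.pi / 4 - α)) exJ exb)
        = (Real.sqrt 2)⁻¹ * (Real.sin (2 * α))⁻¹ * (Real.cos α)⁻¹ ∧
      exB α = 2 * (Real.sin (2 * α))⁻¹ ∧
      exChi α = (Real.cos α)⁻¹ ∧
      exB α / exChi α = (Real.sin α)⁻¹) ∧
    Tendsto (fun α : ℝ => exB α / exChi α) (𝓝[>] 0) atTop := by
  have main : ∀ α : ℝ, 0 < α → α < Real.pi / 4 →
      specNorm (ilsM1 (exA (Real.pi / 4 - α)) exJ exb)
        = (Real.sqrt 2)⁻¹ * (Real.sin (2 * α))⁻¹ * (Real.cos α)⁻¹ ∧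
      specNorm (ilsM2 (exA (Real.pi / 4 - α)) exJ exb)
        = (Real.sqrt 2)⁻¹ * (Real.sin (2 * α))⁻¹ * (Real.cos α)⁻¹ ∧
      exB α = 2 * (Real.sin (2 * α))⁻¹ ∧
      exChi α = (Real.cos α)⁻¹ ∧
      exB α / exChi α = (Real.sin α)⁻¹ := by
    intro α h1 h2
    have hπ := Real.pi_pos
    set θ := Real.pi/4 - α with hθ
    set c := Real.cos α with hc
    set s := Real.sin α with hs
    have hcpos : 0 < c := Real.cos_pos_of_mem_Ioo ⟨by linarith, by linarith⟩
    have hspos : 0 < s := Real.sin_pos_of_pos_of_lt_pi h1 (by linarith)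
    have hsq2 : 0 < Real.sqrt 2 := Real.sqrt_pos.mpr (by norm_num)
    have hr2 : Real.sqrt 2 ^ 2 = 2 := Real.sq_sqrt (by norm_num)
    have hcosθ : Real.cos θ = Real.sqrt 2 / 2 * (c + s) := by
      rw [hθ, Real.cos_sub, Real.cos_pi_div_four, Real.sin_pi_div_four]; ring
    have hsinθ : Real.sin θ = Real.sqrt 2 / 2 * (c - s) := by
      rw [hθ, Real.sin_sub, Real.cos_pi_div_four, Real.sin_pi_div_four]; ring
    have hAT : (exA θ)ᵀ = !![Real.cos θ, Real.sin θ] := by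
      ext i j
      fin_cases i <;> fin_cases j <;> simp [exA]
    have hAJA : (exA θ)ᵀ * exJ * exA θ = !![2 * s * c] := by
      rw [hAT]
      ext i j
      fin_cases i
      fin_cases j
      simp [exA, exJ, Matrix.mul_apply, Fin.sum_univ_two]
      rw [hcosθ, hsinθ]
      linear_combination (((c+s)^2 - (c-s)^2)/4) * hr2
    have hinv : ((exA θ)ᵀ * exJ * exA θ)⁻¹ = !![(2 * s * c)⁻¹] := by
      rw [hAJA]
      apply Matrix.inv_eq_right_inv
      ext i j
      fin_cases i
      fin_cases j
      simp [Matrix.mul_apply]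
      field_simp
    have hrow : ((exA θ)ᵀ * exJ * exA θ)⁻¹ * (exA θ)ᵀ * exJ
        = !![(2*s*c)⁻¹ * (Real.sqrt 2/2*(c+s)), -((2*s*c)⁻¹ * (Real.sqrt 2/2*(c-s)))] := by
      rw [hinv, hAT]
      ext i j
      fin_cases i <;> fin_cases j <;>
        simp [exJ, Matrix.mul_apply, Fin.sum_univ_two, Fin.sum_univ_one, hcosθ, hsinθ] <;>
        ring
    have hx : ilsX (exA θ) exJ exb = ![(Real.sqrt 2 * c)⁻¹] := by
      show (((exA θ)ᵀ * exJ * exA θ)⁻¹ * (exA θ)ᵀ * exJ) *ᵥ exb = _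
      rw [hrow]
      funext i
      fin_cases i
      simp [Matrix.mulVec, dotProduct, Fin.sum_univ_two, exb]
      field_simp
      linear_combination (2*s) * hr2
    have hJr : exJ *ᵥ ilsR (exA θ) exJ exb = ![(c-s)/(2*c), -((c+s)/(2*c))] := by
      have hR : ilsR (exA θ) exJ exb = ![(c-s)/(2*c), (c+s)/(2*c)] := by
        show exb - exA θ *ᵥ ilsX (exA θ) exJ exb = _
        rw [hx]
        funext k
        fin_cases k <;>
          simp [exA, exb, Matrix.mulVec, dotProduct, Fin.sum_univ_one, hcosθ, hsinθ] <;>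
          field_simp <;>
          ring
      rw [hR]
      funext k
      fin_cases k <;> simp [exJ, Matrix.mulVec, dotProduct, Fin.sum_univ_two]
    have hsin2 : Real.sin (2 * α) = 2 * s * c := by
      rw [Real.sin_two_mul]
    have htgt : (0:ℝ) < (Real.sqrt 2)⁻¹ * (2*s*c)⁻¹ * c⁻¹ := by
      apply mul_pos (mul_pos (inv_pos.mpr hsq2) (inv_pos.mpr (by positivity))) (inv_pos.mpr hcpos)
    -- specNorm of M1
    have hM1 : specNorm (ilsM1 (exA θ) exJ exb)
        = (Real.sqrt 2)⁻¹ * (Real.sin (2 * α))⁻¹ * c⁻¹ := by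
      rw [specNorm_one_row, hsin2]
      rw [Fintype.sum_prod_type, Fin.sum_univ_one, Fin.sum_univ_two]
      have e0 : ilsM1 (exA θ) exJ exb 0 (0, 0) = (2*s*c)⁻¹ * ((c-s)/(2*c)) := by
        simp [ilsM1, hinv, hJr]
      have e1 : ilsM1 (exA θ) exJ exb 0 (0, 1) = (2*s*c)⁻¹ * (-((c+s)/(2*c))) := by
        simp [ilsM1, hinv, hJr]
      rw [e0, e1]
      have key : ((2*s*c)⁻¹ * ((c-s)/(2*c)))^2 + ((2*s*c)⁻¹ * (-((c+s)/(2*c))))^2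
          = ((Real.sqrt 2)⁻¹ * (2*s*c)⁻¹ * c⁻¹)^2 := by
        have h1 : Real.sin α ^ 2 + Real.cos α ^ 2 = 1 := Real.sin_sq_add_cos_sq α
        field_simp
        linear_combination (2*c^2 + 2*s^2) * hr2 + 4 * h1
      rw [key, Real.sqrt_sq htgt.le]
    have hM2 : specNorm (ilsM2 (exA θ) exJ exb)
        = (Real.sqrt 2)⁻¹ * (Real.sin (2 * α))⁻¹ * c⁻¹ := by
      rw [specNorm_one_row, hsin2]
      rw [Fintype.sum_prod_type, Fin.sum_univ_one, Fin.sum_univ_two]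
      have e0 : ilsM2 (exA θ) exJ exb 0 (0, 0)
          = (Real.sqrt 2 * c)⁻¹ * ((2*s*c)⁻¹ * (Real.sqrt 2/2*(c+s))) := by
        simp only [ilsM2, Matrix.of_apply, hx, hrow]
        simp
      have e1 : ilsM2 (exA θ) exJ exb 0 (0, 1)
          = (Real.sqrt 2 * c)⁻¹ * (-((2*s*c)⁻¹ * (Real.sqrt 2/2*(c-s)))) := by
        simp only [ilsM2, Matrix.of_apply, hx, hrow]
        simp
      rw [e0, e1]
      have key : ((Real.sqrt 2 * c)⁻¹ * ((2*s*c)⁻¹ * (Real.sqrt 2/2*(c+s))))^2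
          + ((Real.sqrt 2 * c)⁻¹ * (-((2*s*c)⁻¹ * (Real.sqrt 2/2*(c-s)))))^2
          = ((Real.sqrt 2)⁻¹ * (2*s*c)⁻¹ * c⁻¹)^2 := by
        have h1 : Real.sin α ^ 2 + Real.cos α ^ 2 = 1 := Real.sin_sq_add_cos_sq α
        field_simp
        linear_combination (2*(s^2+c^2) + 16*c^4*s^2 - 16*c^4*s^2*(s^2+c^2)) * hr2 + (4 - 32*c^4*s^2 + 16*(Real.sqrt 2)^2*c^4*s^2) * h1
      rw [key, Real.sqrt_sq htgt.le]
    have hMdiff : specNorm (ilsM1 (exA θ) exJ exb - ilsM2 (exA θ) exJ exb)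
        = (Real.sqrt 2)⁻¹ * (c^2)⁻¹ := by
      rw [specNorm_one_row]
      rw [Fintype.sum_prod_type, Fin.sum_univ_one, Fin.sum_univ_two]
      have e0 : (ilsM1 (exA θ) exJ exb - ilsM2 (exA θ) exJ exb) 0 (0, 0)
          = -((2*c^2)⁻¹) := by
        simp only [Matrix.sub_apply, ilsM1, ilsM2, Matrix.of_apply]
        rw [hrow, hinv, hJr, hx]
        simp
        field_simp
        ring
      have e1 : (ilsM1 (exA θ) exJ exb - ilsM2 (exA θ) exJ exb) 0 (0, 1)
          = -((2*c^2)⁻¹) := by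
        simp only [Matrix.sub_apply, ilsM1, ilsM2, Matrix.of_apply]
        rw [hrow, hinv, hJr, hx]
        simp
        field_simp
        ring
      rw [e0, e1]
      have key : (-((2*c^2)⁻¹))^2 + (-((2*c^2)⁻¹))^2 = ((Real.sqrt 2)⁻¹ * (c^2)⁻¹)^2 := by
        field_simp
        linear_combination 2 * hr2
      rw [key, Real.sqrt_sq (by positivity)]
    have hfrob : frobNorm (exA θ) = 1 := by
      have hsum : ∑ i, ∑ j, ((exA θ) i j)^2 = 1 := by
        have h00 : exA θ 0 0 = Real.cos θ := by simp [exA]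
        have h10 : exA θ 1 0 = Real.sin θ := by simp [exA]
        rw [Fin.sum_univ_two, Fin.sum_univ_one, Fin.sum_univ_one, h00, h10]
        linear_combination Real.sin_sq_add_cos_sq θ
      unfold frobNorm
      rw [hsum]
      exact Real.sqrt_one
    have heN : eNorm (ilsX (exA θ) exJ exb) = (Real.sqrt 2 * c)⁻¹ := by
      rw [hx]
      unfold eNorm
      rw [Fin.sum_univ_one]
      simp
      rw [Real.sqrt_sq (by positivity)]
    have hB : exB α = 2 * (Real.sin (2 * α))⁻¹ := by
      unfold exB
      rw [← hθ, hfrob, heN, hM1, hM2, hsin2]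
      field_simp
      ring
    have hChi : exChi α = c⁻¹ := by
      unfold exChi
      rw [← hθ, hfrob, heN, hMdiff]
      field_simp
    refine ⟨hM1, hM2, hB, hChi, ?_⟩
    rw [hB, hChi, hsin2]
    field_simp
  refine ⟨main, ?_⟩
  have heq : ∀ᶠ α in 𝓝[>] (0:ℝ), (Real.sin α)⁻¹ = exB α / exChi α := by
    filter_upwards [Ioo_mem_nhdsGT_of_mem
      (⟨le_refl 0, by positivity⟩ : (0:ℝ) ∈ Set.Ico 0 (Real.pi/4))] with α hα
    exact ((main α hα.1 hα.2).2.2.2.2).symm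
  apply Filter.Tendsto.congr' heq
  apply Filter.Tendsto.inv_tendsto_nhdsGT_zero
  apply tendsto_nhdsWithin_of_tendsto_nhds_of_eventually_within
  · have := Real.continuous_sin.tendsto 0
    rw [Real.sin_zero] at this
    exact this.mono_left nhdsWithin_le_nhds
  · filter_upwards [Ioo_mem_nhdsGT_of_mem
      (⟨le_refl 0, Real.pi_pos⟩ : (0:ℝ) ∈ Set.Ico 0 Real.pi)] with α hα
    exact Real.sin_pos_of_pos_of_lt_pi hα.1 hα.2
end
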